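/- Let X be a real Hilbert space and g : X → X be twice continuously Fréchet differentiable with ‖g′(y; u)‖ ≤ κ‖u‖ and ‖g″(y; u, v)‖ ≤ κ̂‖u‖‖v‖ for all y, u, v ∈ X, and additionally assume g is a κ-contraction with 0 < κ < 1. Let x_{k−2}, x_{k−1} ∈ X with residuals w_{k−1} := g(x_{k−2}) − x_{k−2}, w_k := g(x_{k−1}) − x_{k−1}, with w_k ≠ w_{k−1} and w_k ≠ 0, and let α ∈ ℝ minimize α ↦ ‖α w_k + (1 − α) w_{k−1}‖, with α ≠ 0. For 0 < β ≤ 1 set x_k := (1 − β)(α x_{k−1} + (1 − α) x_{k−2}) + β(α g(x_{k−1}) + (1 − α) g(x_{k−2})), define θ_k := ‖α w_k + (1 − α) w_{k−1}‖/‖w_k‖ and w_{k+1} := g(x_k) − x_k, assume w_{k+1} ≠ w_k, and let α′ ∈ ℝ minimize α′ ↦ ‖α′ w_{k+1} + (1 − α′) w_k‖, with α′ ≠ 0. Then ‖w_{k+1}‖ ≤ θ_k ( (1 − β) + κβ ) ‖w_k‖ + (κ̂/(1 − κ)²) ( ‖w_k‖/|α′| + ‖w_{k−1}‖/|α| ) ‖w_k‖.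 In particular the depth m = 1 Anderson iteration satisfies ‖w_{k+1}‖ ≤ θ_k((1−β) + κβ)‖w_k‖ plus terms of second order in ‖w_k‖ and ‖w_{k−1}‖. -/

import Mathlib

private lemma aux_min_inner {X : Type*} [NormedAddCommGroup X] [InnerProductSpace ℝ X]
    (w d : X) (hd : d ≠ 0) (c : ℝ)
    (h : ∀ t : ℝ, ‖w + c • d‖ ≤ ‖w + t • d‖) :
    |c| * ‖d‖ ≤ ‖w‖ := by
  have hdn : (0:ℝ) < ‖d‖ := norm_pos_iff.mpr hd
  have hdn2 : (0:ℝ) < ‖d‖ ^ 2 := by positivity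
  have expand : ∀ s : ℝ, ‖w + s • d‖ ^ 2
      = ‖w‖ ^ 2 + 2 * s * (inner ℝ w d : ℝ) + s ^ 2 * ‖d‖ ^ 2 := by
    intro s
    rw [norm_add_sq_real, real_inner_smul_right, norm_smul, Real.norm_eq_abs, mul_pow, sq_abs]
    ring
  have hsq : ∀ s : ℝ, ‖w + c • d‖ ^ 2 ≤ ‖w + s • d‖ ^ 2 :=
    fun s => pow_le_pow_left₀ (norm_nonneg _) (h s) 2
  set q : ℝ := (inner ℝ w d : ℝ) + c * ‖d‖ ^ 2 with hq
  set s : ℝ := -q / ‖d‖ ^ 2 with hs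
  have hsD : s * ‖d‖ ^ 2 = -q := by
    rw [hs]; field_simp
  have hq0 : q = 0 := by
    have h' := hsq (c + s)
    rw [expand, expand] at h'
    have heq : ‖w‖ ^ 2 + 2 * (c + s) * (inner ℝ w d : ℝ) + (c + s) ^ 2 * ‖d‖ ^ 2
        - (‖w‖ ^ 2 + 2 * c * (inner ℝ w d : ℝ) + c ^ 2 * ‖d‖ ^ 2)
        = 2 * s * q + s ^ 2 * ‖d‖ ^ 2 := by rw [hq]; ring
    have h3 : 0 ≤ 2 * s * q + s ^ 2 * ‖d‖ ^ 2 := by linarith [h', heq]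
    have h4 : 0 ≤ (2 * s * q + s ^ 2 * ‖d‖ ^ 2) * ‖d‖ ^ 2 :=
      mul_nonneg h3 hdn2.le
    have h5 : (2 * s * q + s ^ 2 * ‖d‖ ^ 2) * ‖d‖ ^ 2 = - q ^ 2 := by
      nlinarith [hsD]
    nlinarith [sq_nonneg q]
  have hip : c * ‖d‖ ^ 2 = -(inner ℝ w d : ℝ) := by
    rw [hq] at hq0; linarith
  have habs : |c| * ‖d‖ ^ 2 ≤ ‖w‖ * ‖d‖ := by
    have h1 : |c * ‖d‖^2| = |(inner ℝ w d : ℝ)| := by rw [hip, abs_neg]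
    have h2 := abs_real_inner_le_norm w d
    rw [abs_mul, abs_of_nonneg (by positivity : (0:ℝ) ≤ ‖d‖^2)] at h1
    linarith [h1, h2]
  nlinarith [habs, hdn]

private lemma aux_ftc {X : Type*} [NormedAddCommGroup X] [NormedSpace ℝ X] [CompleteSpace X]
    (g : X → X) (hC2 : ContDiff ℝ 2 g) (a b : X) :
    g b - g a = ∫ t in (0:ℝ)..1, (fderiv ℝ g (a + t • (b - a))) (b - a) := by
  have hdiff : Differentiable ℝ g := hC2.differentiable (by norm_num)
  have hcont : Continuous (fderiv ℝ g) := hC2.continuous_fderiv (by norm_num)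
  have hd : ∀ t ∈ Set.uIcc (0:ℝ) 1,
      HasDerivAt (fun s : ℝ => g (a + s • (b - a)))
        ((fderiv ℝ g (a + t • (b - a))) (b - a)) t := by
    intro t _
    have hline : HasDerivAt (fun s : ℝ => a + s • (b - a)) (b - a) t := by
      simpa using ((hasDerivAt_id t).smul_const (b - a)).const_add a
    exact (hdiff (a + t • (b - a))).hasFDerivAt.comp_hasDerivAt t hline
  have hint : IntervalIntegrable (fun t : ℝ => (fderiv ℝ g (a + t • (b - a))) (b - a))
      MeasureTheory.volume 0 1 := by
    apply Continuous.intervalIntegrable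
    exact (hcont.comp (by continuity)).clm_apply continuous_const
  have h := intervalIntegral.integral_eq_sub_of_hasDerivAt hd hint
  rw [h]
  simp

private lemma aux_lip {X : Type*} [NormedAddCommGroup X] [NormedSpace ℝ X]
    (g : X → X) (κh : ℝ) (hκh : 0 < κh) (hC2 : ContDiff ℝ 2 g)
    (hg2 : ∀ y u v : X, ‖fderiv ℝ (fderiv ℝ g) y u v‖ ≤ κh * ‖u‖ * ‖v‖)
    (x y : X) : ‖fderiv ℝ g y - fderiv ℝ g x‖ ≤ κh * ‖y - x‖ := by
  have hdiff : Differentiable ℝ (fderiv ℝ g) :=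
    (hC2.fderiv_right (m := 1) (by norm_num)).differentiable (by norm_num)
  have hbound : ∀ z : X, ‖fderiv ℝ (fderiv ℝ g) z‖ ≤ κh := by
    intro z
    refine ContinuousLinearMap.opNorm_le_bound _ hκh.le fun u => ?_
    refine ContinuousLinearMap.opNorm_le_bound _ (by positivity) fun v => ?_
    simpa [mul_assoc] using hg2 z u v
  exact (convex_univ).norm_image_sub_le_of_norm_fderiv_le
    (fun z _ => hdiff z) (fun z _ => hbound z) (Set.mem_univ x) (Set.mem_univ y)

set_option maxHeartbeats 1000000 in
/-- the depth `m = 1` damped Anderson iteration with a contractive `g`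
satisfies
`‖w_{k+1}‖ ≤ θ_k ((1-β) + κβ) ‖w_k‖ + (κ̂/(1-κ)²)(‖w_k‖/|α'| + ‖w_{k-1}‖/|α|) ‖w_k‖`. -/
theorem stmt_16 {X : Type*} [NormedAddCommGroup X] [InnerProductSpace ℝ X] [CompleteSpace X]
    (g : X → X) (κ κh : ℝ) (hκ0 : 0 < κ) (hκ1 : κ < 1) (hκh : 0 < κh)
    (hC2 : ContDiff ℝ 2 g)
    (hg1 : ∀ y u : X, ‖fderiv ℝ g y u‖ ≤ κ * ‖u‖)
    (hg2 : ∀ y u v : X, ‖fderiv ℝ (fderiv ℝ g) y u v‖ ≤ κh * ‖u‖ * ‖v‖)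
    (hg : ∀ x y : X, ‖g y - g x‖ ≤ κ * ‖x - y‖)
    (xkm2 xkm1 : X)
    (wkm1 wk : X) (hwkm1 : wkm1 = g xkm2 - xkm2) (hwk : wk = g xkm1 - xkm1)
    (hne : wk ≠ wkm1) (hwk0 : wk ≠ 0)
    (α : ℝ)
    (hmin : ∀ t : ℝ, ‖α • wk + (1 - α) • wkm1‖ ≤ ‖t • wk + (1 - t) • wkm1‖)
    (hα0 : α ≠ 0)
    (β : ℝ) (hβ0 : 0 < β) (hβ1 : β ≤ 1)
    (xk : X)
    (hxk : xk = (1 - β) • (α • xkm1 + (1 - α) • xkm2) +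
      β • (α • g xkm1 + (1 - α) • g xkm2))
    (θ : ℝ) (hθ : θ = ‖α • wk + (1 - α) • wkm1‖ / ‖wk‖)
    (wk1 : X) (hwk1 : wk1 = g xk - xk) (hne1 : wk1 ≠ wk)
    (α' : ℝ)
    (hmin' : ∀ t : ℝ, ‖α' • wk1 + (1 - α') • wk‖ ≤ ‖t • wk1 + (1 - t) • wk‖)
    (hα'0 : α' ≠ 0) :
    ‖wk1‖ ≤ θ * ((1 - β) + κ * β) * ‖wk‖ +
      (κh / (1 - κ) ^ 2) * (‖wk‖ / |α'| + ‖wkm1‖ / |α|) * ‖wk‖ := by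
  have hμ : (0:ℝ) < 1 - κ := by linarith
  have hwkpos : (0:ℝ) < ‖wk‖ := norm_pos_iff.mpr hwk0
  have hαpos : (0:ℝ) < |α| := abs_pos.mpr hα0
  have hα'pos : (0:ℝ) < |α'| := abs_pos.mpr hα'0
  set e1 : X := xkm1 - xkm2 with he1
  set e2 : X := xk - xkm1 with he2
  set Δ : X := wk - wkm1 with hΔ
  set Δ' : X := wk1 - wk with hΔ'
  set wbar : X := α • wk + (1 - α) • wkm1 with hwbar
  have hΔ0 : Δ ≠ 0 := sub_ne_zero.mpr hne
  have hΔ'0 : Δ' ≠ 0 := sub_ne_zero.mpr hne1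
  -- optimality bounds
  have hmin1 : ∀ t : ℝ, ‖wkm1 + α • Δ‖ ≤ ‖wkm1 + t • Δ‖ := by
    intro t
    have h1 : wkm1 + α • Δ = α • wk + (1 - α) • wkm1 := by rw [hΔ]; module
    have h2 : wkm1 + t • Δ = t • wk + (1 - t) • wkm1 := by rw [hΔ]; module
    rw [h1, h2]; exact hmin t
  have hA : |α| * ‖Δ‖ ≤ ‖wkm1‖ := aux_min_inner wkm1 Δ hΔ0 α hmin1
  have hmin2 : ∀ t : ℝ, ‖wk + (α - 1) • Δ‖ ≤ ‖wk + t • Δ‖ := by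
    intro t
    have h1 : wk + (α - 1) • Δ = α • wk + (1 - α) • wkm1 := by rw [hΔ]; module
    have h2 : wk + t • Δ = (t + 1) • wk + (1 - (t + 1)) • wkm1 := by rw [hΔ]; module
    rw [h1, h2]; exact hmin (t + 1)
  have hB : |1 - α| * ‖Δ‖ ≤ ‖wk‖ := by
    have := aux_min_inner wk Δ hΔ0 (α - 1) hmin2
    rwa [abs_sub_comm α 1] at this
  have hmin3 : ∀ t : ℝ, ‖wk + α' • Δ'‖ ≤ ‖wk + t • Δ'‖ := by
    intro t
    have h1 : wk + α' • Δ' = α' • wk1 + (1 - α') • wk := by rw [hΔ']; module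
    have h2 : wk + t • Δ' = t • wk1 + (1 - t) • wk := by rw [hΔ']; module
    rw [h1, h2]; exact hmin' t
  have hC : |α'| * ‖Δ'‖ ≤ ‖wk‖ := aux_min_inner wk Δ' hΔ'0 α' hmin3
  -- contraction bounds on steps
  have hΔe1 : (1 - κ) * ‖e1‖ ≤ ‖Δ‖ := by
    have h1 : Δ = (g xkm1 - g xkm2) - e1 := by rw [hΔ, hwk, hwkm1, he1]; abel
    have h2 : ‖g xkm1 - g xkm2‖ ≤ κ * ‖e1‖ := by
      have := hg xkm2 xkm1
      rwa [← norm_neg (xkm2 - xkm1), neg_sub] at this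
    have h3 : ‖e1‖ - ‖g xkm1 - g xkm2‖ ≤ ‖e1 - (g xkm1 - g xkm2)‖ := norm_sub_norm_le _ _
    have h4 : ‖Δ‖ = ‖e1 - (g xkm1 - g xkm2)‖ := by rw [h1]; exact norm_sub_rev _ _
    linarith
  have hΔ'e2 : (1 - κ) * ‖e2‖ ≤ ‖Δ'‖ := by
    have h1 : Δ' = (g xk - g xkm1) - e2 := by rw [hΔ', hwk1, hwk, he2]; abel
    have h2 : ‖g xk - g xkm1‖ ≤ κ * ‖e2‖ := by
      have := hg xkm1 xk
      rwa [← norm_neg (xkm1 - xk), neg_sub] at this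
    have h3 : ‖e2‖ - ‖g xk - g xkm1‖ ≤ ‖e2 - (g xk - g xkm1)‖ := norm_sub_norm_le _ _
    have h4 : ‖Δ'‖ = ‖e2 - (g xk - g xkm1)‖ := by rw [h1]; exact norm_sub_rev _ _
    linarith
  -- FTC
  have hcont : Continuous (fderiv ℝ g) := hC2.continuous_fderiv (by norm_num)
  have hftc2 : g xk - g xkm1 = ∫ t in (0:ℝ)..1, (fderiv ℝ g (xkm1 + t • e2)) e2 := by
    simpa [← he2] using aux_ftc g hC2 xkm1 xk
  have hftc1 : g xkm1 - g xkm2 = ∫ t in (0:ℝ)..1, (fderiv ℝ g (xkm2 + t • e1)) e1 := by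
    simpa [← he1] using aux_ftc g hC2 xkm2 xkm1
  have hintAw : IntervalIntegrable (fun t : ℝ => (fderiv ℝ g (xkm1 + t • e2)) wbar)
      MeasureTheory.volume 0 1 :=
    ((hcont.comp (continuous_const.add (continuous_id.smul continuous_const))).clm_apply continuous_const).intervalIntegrable 0 1
  have hintAe1 : IntervalIntegrable (fun t : ℝ => (fderiv ℝ g (xkm1 + t • e2)) e1)
      MeasureTheory.volume 0 1 :=
    ((hcont.comp (continuous_const.add (continuous_id.smul continuous_const))).clm_apply continuous_const).intervalIntegrable 0 1
  have hintBe1 : IntervalIntegrable (fun t : ℝ => (fderiv ℝ g (xkm2 + t • e1)) e1)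
      MeasureTheory.volume 0 1 :=
    ((hcont.comp (continuous_const.add (continuous_id.smul continuous_const))).clm_apply continuous_const).intervalIntegrable 0 1
  -- step decomposition
  have he2eq : e2 = β • wbar - (1 - α) • e1 := by
    rw [he2, he1, hwbar, hwk, hwkm1, hxk]; module
  have hI : g xk - g xkm1
      = β • (∫ t in (0:ℝ)..1, (fderiv ℝ g (xkm1 + t • e2)) wbar)
        - (1 - α) • (∫ t in (0:ℝ)..1, (fderiv ℝ g (xkm1 + t • e2)) e1) := by
    have hint1 : IntervalIntegrable (fun t : ℝ => β • (fderiv ℝ g (xkm1 + t • e2)) wbar)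
        MeasureTheory.volume 0 1 :=
      (((hcont.comp (continuous_const.add (continuous_id.smul continuous_const))).clm_apply
        continuous_const).const_smul β).intervalIntegrable 0 1
    have hint2 : IntervalIntegrable (fun t : ℝ => (1 - α) • (fderiv ℝ g (xkm1 + t • e2)) e1)
        MeasureTheory.volume 0 1 :=
      (((hcont.comp (continuous_const.add (continuous_id.smul continuous_const))).clm_apply
        continuous_const).const_smul (1 - α)).intervalIntegrable 0 1
    have hfun : (fun t : ℝ => (fderiv ℝ g (xkm1 + t • e2)) e2)
        = fun t : ℝ => β • (fderiv ℝ g (xkm1 + t • e2)) wbar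
          - (1 - α) • (fderiv ℝ g (xkm1 + t • e2)) e1 := by
      funext t
      rw [he2eq]
      simp [map_sub, map_smul]
    rw [hftc2, hfun, intervalIntegral.integral_sub hint1 hint2,
      intervalIntegral.integral_smul, intervalIntegral.integral_smul]
  have hkey : wk1 = (1 - β) • wbar
      + β • (∫ t in (0:ℝ)..1, (fderiv ℝ g (xkm1 + t • e2)) wbar)
      + (1 - α) • ((g xkm1 - g xkm2) - ∫ t in (0:ℝ)..1, (fderiv ℝ g (xkm1 + t • e2)) e1) := by
    have halg : wk1 = (1 - β) • wbar + (g xk - g xkm1) + (1 - α) • (g xkm1 - g xkm2) := by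
      rw [hwk1, hwbar, hwk, hwkm1, hxk]; module
    rw [halg, hI]; module
  -- norm bounds for pieces
  have n1 : ‖∫ t in (0:ℝ)..1, (fderiv ℝ g (xkm1 + t • e2)) wbar‖ ≤ κ * ‖wbar‖ := by
    have := intervalIntegral.norm_integral_le_of_norm_le_const
      (a := (0:ℝ)) (b := 1) (C := κ * ‖wbar‖)
      (f := fun t : ℝ => (fderiv ℝ g (xkm1 + t • e2)) wbar)
      (fun t _ => hg1 _ _)
    simpa using this
  have n2 : ‖(g xkm1 - g xkm2) - ∫ t in (0:ℝ)..1, (fderiv ℝ g (xkm1 + t • e2)) e1‖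
      ≤ κh * (‖e1‖ + ‖e2‖) * ‖e1‖ := by
    rw [hftc1, ← intervalIntegral.integral_sub hintBe1 hintAe1]
    have hbd : ∀ t ∈ Set.uIoc (0:ℝ) 1,
        ‖(fderiv ℝ g (xkm2 + t • e1)) e1 - (fderiv ℝ g (xkm1 + t • e2)) e1‖
          ≤ κh * (‖e1‖ + ‖e2‖) * ‖e1‖ := by
      intro t ht
      rw [Set.uIoc_of_le (by norm_num : (0:ℝ) ≤ 1)] at ht
      obtain ⟨ht0, ht1⟩ := ht
      have hpt : (xkm2 + t • e1) - (xkm1 + t • e2) = (t - 1) • e1 - t • e2 := by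
        rw [he1, he2]; module
      have h1 : ‖(fderiv ℝ g (xkm2 + t • e1)) e1 - (fderiv ℝ g (xkm1 + t • e2)) e1‖
          ≤ ‖fderiv ℝ g (xkm2 + t • e1) - fderiv ℝ g (xkm1 + t • e2)‖ * ‖e1‖ := by
        rw [← ContinuousLinearMap.sub_apply]
        exact ContinuousLinearMap.le_opNorm _ _
      have h2 : ‖fderiv ℝ g (xkm2 + t • e1) - fderiv ℝ g (xkm1 + t • e2)‖
          ≤ κh * ((xkm2 + t • e1) - (xkm1 + t • e2) |> norm) :=
        aux_lip g κh hκh hC2 hg2 _ _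
      have h3 : ‖(t - 1) • e1 - t • e2‖ ≤ ‖e1‖ + ‖e2‖ := by
        calc ‖(t - 1) • e1 - t • e2‖ ≤ ‖(t - 1) • e1‖ + ‖t • e2‖ := norm_sub_le _ _
          _ = |t - 1| * ‖e1‖ + |t| * ‖e2‖ := by rw [norm_smul, norm_smul]; simp
          _ ≤ 1 * ‖e1‖ + 1 * ‖e2‖ := by
              gcongr
              · rw [abs_le]; constructor <;> linarith
              · rw [abs_le]; constructor <;> linarith
          _ = ‖e1‖ + ‖e2‖ := by ring
      rw [hpt] at h2
      calc ‖(fderiv ℝ g (xkm2 + t • e1)) e1 - (fderiv ℝ g (xkm1 + t • e2)) e1‖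
          ≤ (κh * ‖(t - 1) • e1 - t • e2‖) * ‖e1‖ :=
            le_trans h1 (mul_le_mul_of_nonneg_right h2 (norm_nonneg _))
        _ ≤ (κh * (‖e1‖ + ‖e2‖)) * ‖e1‖ := by gcongr
        _ = κh * (‖e1‖ + ‖e2‖) * ‖e1‖ := by ring
    have := intervalIntegral.norm_integral_le_of_norm_le_const hbd
    simpa using this
  -- assemble
  have hwbarnorm : ‖wbar‖ = θ * ‖wk‖ := by
    rw [hθ, div_mul_cancel₀ _ (ne_of_gt hwkpos)]
  have hmain : ‖wk1‖ ≤ (1 - β) * ‖wbar‖ + β * (κ * ‖wbar‖)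
      + |1 - α| * (κh * (‖e1‖ + ‖e2‖) * ‖e1‖) := by
    rw [hkey]
    calc ‖(1 - β) • wbar + β • (∫ t in (0:ℝ)..1, (fderiv ℝ g (xkm1 + t • e2)) wbar)
        + (1 - α) • ((g xkm1 - g xkm2) - ∫ t in (0:ℝ)..1, (fderiv ℝ g (xkm1 + t • e2)) e1)‖
        ≤ ‖(1 - β) • wbar‖ + ‖β • (∫ t in (0:ℝ)..1, (fderiv ℝ g (xkm1 + t • e2)) wbar)‖
          + ‖(1 - α) • ((g xkm1 - g xkm2) - ∫ t in (0:ℝ)..1, (fderiv ℝ g (xkm1 + t • e2)) e1)‖ :=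
          norm_add₃_le
      _ ≤ (1 - β) * ‖wbar‖ + β * (κ * ‖wbar‖) + |1 - α| * (κh * (‖e1‖ + ‖e2‖) * ‖e1‖) := by
          rw [norm_smul, norm_smul, norm_smul, Real.norm_eq_abs, Real.norm_eq_abs,
            Real.norm_eq_abs, abs_of_nonneg (by linarith : (0:ℝ) ≤ 1 - β),
            abs_of_nonneg hβ0.le]
          gcongr
  -- remainder estimate
  have key1 : |1 - α| * ‖e1‖ ≤ ‖wk‖ / (1 - κ) := by
    rw [le_div_iff₀ hμ]
    nlinarith [hB, hΔe1, abs_nonneg (1 - α), norm_nonneg e1]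
  have key2a : ‖e1‖ ≤ ‖wkm1‖ / |α| / (1 - κ) := by
    rw [div_div, le_div_iff₀ (by positivity)]
    nlinarith [hA, hΔe1, norm_nonneg e1]
  have key2b : ‖e2‖ ≤ ‖wk‖ / |α'| / (1 - κ) := by
    rw [div_div, le_div_iff₀ (by positivity)]
    nlinarith [hC, hΔ'e2, norm_nonneg e2]
  have hrem : |1 - α| * (κh * (‖e1‖ + ‖e2‖) * ‖e1‖)
      ≤ (κh / (1 - κ) ^ 2) * (‖wk‖ / |α'| + ‖wkm1‖ / |α|) * ‖wk‖ := by
    have h1 : |1 - α| * (κh * (‖e1‖ + ‖e2‖) * ‖e1‖)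
        = κh * ((|1 - α| * ‖e1‖) * (‖e1‖ + ‖e2‖)) := by ring
    have h2 : (|1 - α| * ‖e1‖) * (‖e1‖ + ‖e2‖)
        ≤ (‖wk‖ / (1 - κ)) * ((‖wkm1‖ / |α| / (1 - κ)) + (‖wk‖ / |α'| / (1 - κ))) := by
      apply mul_le_mul key1 (by linarith [key2a, key2b])
        (by positivity) (by positivity)
    have h3 : κh * ((‖wk‖ / (1 - κ)) * ((‖wkm1‖ / |α| / (1 - κ)) + (‖wk‖ / |α'| / (1 - κ))))
        = (κh / (1 - κ) ^ 2) * (‖wk‖ / |α'| + ‖wkm1‖ / |α|) * ‖wk‖ := by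
      field_simp
      ring
    calc |1 - α| * (κh * (‖e1‖ + ‖e2‖) * ‖e1‖)
        = κh * ((|1 - α| * ‖e1‖) * (‖e1‖ + ‖e2‖)) := h1
      _ ≤ κh * ((‖wk‖ / (1 - κ)) * ((‖wkm1‖ / |α| / (1 - κ)) + (‖wk‖ / |α'| / (1 - κ)))) := by
          gcongr
      _ = (κh / (1 - κ) ^ 2) * (‖wk‖ / |α'| + ‖wkm1‖ / |α|) * ‖wk‖ := h3
  calc ‖wk1‖ ≤ (1 - β) * ‖wbar‖ + β * (κ * ‖wbar‖)
      + |1 - α| * (κh * (‖e1‖ + ‖e2‖) * ‖e1‖) := hmain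
    _ = ((1 - β) + κ * β) * (θ * ‖wk‖) + |1 - α| * (κh * (‖e1‖ + ‖e2‖) * ‖e1‖) := by
        rw [hwbarnorm]; ring
    _ ≤ θ * ((1 - β) + κ * β) * ‖wk‖
        + (κh / (1 - κ) ^ 2) * (‖wk‖ / |α'| + ‖wkm1‖ / |α|) * ‖wk‖ := by
        rw [show ((1 - β) + κ * β) * (θ * ‖wk‖) = θ * ((1 - β) + κ * β) * ‖wk‖ by ring]
        linarith [hrem]
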